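/- Under the separable least-squares model assumptions with A(x) of full column rank for every x ∈ Ω and σ̃ := min_{x∈Ω} σ_min(A(x)) > 0, let L_vp(x) = ½‖(I − A(x)A(x)⁺)z‖² be the variable-projection objective. Suppose B ⊆ Ω is a convex set containing x* on which L_vp is α_vp-strongly convex for some α_vp > 0, and suppose x̂ ∈ B is a critical point of L_vp (∇L_vp(x̂) = 0). Set G = ‖∇L_vp(x*)‖ and ŷ(x) = A(x)⁺z. Then the lifted estimate θ̂_vp = (x̂, ŷ(x̂)) satisfies ρ(θ̂_vp, θ*) ≤ (σ₂‖y*‖ + σ₁)·(G/α_vp) + (σ₁/σ̃)·‖w‖ + (σ₁²/σ̃)·(G/α_vp)·‖y*‖. -/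
import Mathlib


/-!
STATEMENT 11: Stability of variable-projection recovery.

`L_vp(x) = ½‖(I − A(x)A(x)⁺)z‖²` with `ŷ(x) = A(x)⁺z`; `α_vp`-strong convexity on the
convex set `B ⊆ Ω` is expressed through the second Fréchet derivative of `L_vp`, and
`G = ‖∇L_vp(x*)‖` is the norm of the first Fréchet derivative at `x*`.  The lifted estimate
`θ̂_vp = (x̂, ŷ(x̂))` satisfies the stated bound in the unmixing metric
`ρ(θ̂_vp, θ*) = (σ₂‖y*‖ + σ₁)‖x̂ − x*‖ + σ₁‖ŷ(x̂) − y*‖`.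
-/

noncomputable section

abbrev EucSp (n : ℕ) : Type := EuclideanSpace ℝ (Fin n)

/-- The Moore–Penrose pseudo-inverse `A(x)⁺ = (A(x)ᵀA(x))⁻¹A(x)ᵀ` of a full-column-rank
dictionary. -/
def pinv {p d N : ℕ} (A : EucSp p → (EucSp d →L[ℝ] EucSp N)) (x : EucSp p) :
    EucSp N →L[ℝ] EucSp d :=
  (ContinuousLinearMap.adjoint (A x) ∘L A x).inverse ∘L ContinuousLinearMap.adjoint (A x)

/-- The variable-projection objective `L_vp(x) = ½‖(I − A(x)A(x)⁺)z‖²`. -/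
def lossVP {p d N : ℕ} (A : EucSp p → (EucSp d →L[ℝ] EucSp N)) (z : EucSp N)
    (x : EucSp p) : ℝ :=
  (1 / 2) * ‖z - A x (pinv A x z)‖ ^ 2


section Aux
open ContinuousLinearMap
open scoped RealInnerProductSpace

lemma pinv_aux {d N : ℕ} (A0 : EucSp d →L[ℝ] EucSp N) (σm : ℝ) (hσm : 0 < σm)
    (hb : ∀ v, σm * ‖v‖ ≤ ‖A0 v‖) :
    (∀ v, ((adjoint A0 ∘L A0).inverse ∘L adjoint A0) (A0 v) = v)
    ∧ ∀ z, ‖((adjoint A0 ∘L A0).inverse ∘L adjoint A0) z‖ ≤ ‖z‖ / σm := by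
  set T : EucSp d →L[ℝ] EucSp d := adjoint A0 ∘L A0 with hT
  have hTinner : ∀ u v, ⟪T u, v⟫ = ⟪A0 u, A0 v⟫ := fun u v =>
    adjoint_inner_left A0 v (A0 u)
  have hA0inj : ∀ v : EucSp d, A0 v = 0 → v = 0 := by
    intro v hv
    have h1 := hb v
    rw [hv, norm_zero] at h1
    have h2 : ‖v‖ ≤ 0 := by nlinarith [norm_nonneg v]
    exact norm_le_zero_iff.mp h2
  have hinj : Function.Injective T.toLinearMap := by
    intro u v huv
    have h0 : T (u - v) = 0 := by
      have : T u = T v := huv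
      rw [map_sub, this, sub_self]
    have h1 : ‖A0 (u - v)‖ ^ 2 = 0 := by
      rw [← real_inner_self_eq_norm_sq, ← hTinner, h0, inner_zero_left]
    have h2 : A0 (u - v) = 0 := by
      rw [← norm_eq_zero]; nlinarith [norm_nonneg (A0 (u - v))]
    exact sub_eq_zero.mp (hA0inj _ h2)
  have hbij : Function.Bijective T.toLinearMap :=
    ⟨hinj, LinearMap.injective_iff_surjective.mp hinj⟩
  let e : EucSp d ≃L[ℝ] EucSp d :=
    (LinearEquiv.ofBijective T.toLinearMap hbij).toContinuousLinearEquiv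
  have he : (e : EucSp d →L[ℝ] EucSp d) = T := by ext v; rfl
  have hinv : T.inverse = (e.symm : EucSp d →L[ℝ] EucSp d) := by
    rw [← he, ContinuousLinearMap.inverse_equiv]
  have hTinv : ∀ v, T.inverse (T v) = v := by
    intro v
    have : T v = e v := by rw [← he]; rfl
    rw [hinv, this]
    exact e.symm_apply_apply v
  have hTinv' : ∀ z, T (T.inverse z) = z := by
    intro z
    have h1 : T.inverse z = e.symm z := by rw [hinv]; rfl
    have h2 : ∀ v, T v = e v := fun v => by rw [← he]; rfl
    rw [h1, h2]
    exact e.apply_symm_apply z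
  constructor
  · intro v
    simp only [ContinuousLinearMap.comp_apply]
    exact hTinv v
  · intro z
    set u : EucSp d := T.inverse (adjoint A0 z) with hu
    have hTu : T u = adjoint A0 z := hTinv' _
    have h1 : ‖A0 u‖ ^ 2 = ⟪z, A0 u⟫ := by
      rw [← real_inner_self_eq_norm_sq, ← hTinner, hTu]
      exact adjoint_inner_left A0 u z
    have h2 : ‖A0 u‖ ^ 2 ≤ ‖z‖ * ‖A0 u‖ := by
      rw [h1]; exact real_inner_le_norm z (A0 u)
    have h3 : ‖A0 u‖ ≤ ‖z‖ := by
      rcases eq_or_lt_of_le (norm_nonneg (A0 u)) with h | h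
      · rw [← h]; exact norm_nonneg z
      · nlinarith
    have h4 := hb u
    have h5 : σm * ‖u‖ ≤ ‖z‖ := h4.trans h3
    rw [le_div_iff₀ hσm]
    show ‖u‖ * σm ≤ ‖z‖
    linarith

end Aux

set_option maxHeartbeats 1000000 in
/-- **Stability of variable-projection recovery.** -/
theorem stability_of_variable_projection
    {p d N : ℕ}
    (Ω : Set (EucSp p)) (hΩconv : Convex ℝ Ω) (hΩcomp : IsCompact Ω)
    (A : EucSp p → (EucSp d →L[ℝ] EucSp N)) (hA : ContDiff ℝ 3 A)
    (σ1 σ2 : ℝ)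
    (hσ1 : ∀ x ∈ Ω, ‖iteratedFDeriv ℝ 1 A x‖ ≤ σ1)
    (hσ2 : ∀ x ∈ Ω, ‖iteratedFDeriv ℝ 2 A x‖ ≤ σ2)
    -- full column rank and uniform lower singular-value bound σ̃ > 0
    (hrank : ∀ x ∈ Ω, Function.Injective (A x))
    (σmin : ℝ) (hσmin : 0 < σmin)
    (hσminA : ∀ x ∈ Ω, ∀ v : EucSp d, σmin * ‖v‖ ≤ ‖A x v‖)
    (xs : EucSp p) (hxs : xs ∈ Ω) (ys : EucSp d) (w : EucSp N)
    -- the convex set B ⊆ Ω containing x*, on which L_vp is α_vp-strongly convex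
    (B : Set (EucSp p)) (hBconv : Convex ℝ B) (hBΩ : B ⊆ Ω) (hxsB : xs ∈ B)
    (αvp : ℝ) (hαvp : 0 < αvp)
    (hsc : ∀ x ∈ B, ∀ u : EucSp p,
      αvp * ‖u‖ ^ 2 ≤ fderiv ℝ (fderiv ℝ (lossVP A (A xs ys + w))) x u u)
    -- the critical point x̂ ∈ B and the gradient norm G at x*
    (xhat : EucSp p) (hxhatB : xhat ∈ B)
    (hcrit : fderiv ℝ (lossVP A (A xs ys + w)) xhat = 0)
    (G : ℝ) (hG : G = ‖fderiv ℝ (lossVP A (A xs ys + w)) xs‖) :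
    (σ2 * ‖ys‖ + σ1) * ‖xhat - xs‖ + σ1 * ‖pinv A xhat (A xs ys + w) - ys‖
      ≤ (σ2 * ‖ys‖ + σ1) * (G / αvp) + (σ1 / σmin) * ‖w‖
        + (σ1 ^ 2 / σmin) * (G / αvp) * ‖ys‖ := by
  have hxhatΩ : xhat ∈ Ω := hBΩ hxhatB
  -- basic nonnegativity
  have hσ1nn : 0 ≤ σ1 := le_trans (norm_nonneg _) (hσ1 xs hxs)
  have hσ2nn : 0 ≤ σ2 := le_trans (norm_nonneg _) (hσ2 xs hxs)
  have hGnn : 0 ≤ G := hG ▸ norm_nonneg _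
  have hKnn : 0 ≤ G / αvp := div_nonneg hGnn hαvp.le
  set L : EucSp p → ℝ := lossVP A (A xs ys + w) with hL
  set F : EucSp p → (EucSp p →L[ℝ] ℝ) := fderiv ℝ L with hF
  -- Step A: ‖xhat - xs‖ ≤ G / αvp
  have hxdist : ‖xhat - xs‖ ≤ G / αvp := by
    by_cases hu0 : xhat - xs = 0
    · rw [hu0, norm_zero]; exact hKnn
    · set u : EucSp p := xhat - xs with hudef
      have hunorm : 0 < ‖u‖ := norm_pos_iff.mpr hu0
      have hdiffF : ∀ x ∈ B, DifferentiableAt ℝ F x := by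
        intro x hx
        by_contra hnd
        have h0 : fderiv ℝ F x = 0 := fderiv_zero_of_not_differentiableAt hnd
        have h1 := hsc x hx u
        rw [hF] at h0
        rw [h0] at h1
        simp only [ContinuousLinearMap.zero_apply] at h1
        exact absurd h1 (not_le.mpr (mul_pos hαvp (pow_pos hunorm 2)))
      set γ : ℝ → EucSp p := fun t => xs + t • u with hγ
      have hγB : ∀ t ∈ Set.Icc (0:ℝ) 1, γ t ∈ B := by
        intro t ht
        have h1 := hBconv hxsB hxhatB (by linarith [ht.2] : (0:ℝ) ≤ 1 - t) ht.1
          (by ring)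
        have h2 : (1 - t) • xs + t • xhat = γ t := by
          simp only [hγ, hudef]; module
        rwa [h2] at h1
      set g : ℝ → ℝ := fun t => F (γ t) u with hg
      have hgderiv : ∀ t ∈ Set.Icc (0:ℝ) 1,
          HasDerivAt g (fderiv ℝ F (γ t) u u) t := by
        intro t ht
        have h1 : HasDerivAt γ u t := by
          have : HasDerivAt (fun s : ℝ => s • u) ((1:ℝ) • u) t :=
            (hasDerivAt_id t).smul_const u
          rw [one_smul] at this
          exact this.const_add xs
        have h2 : HasFDerivAt F (fderiv ℝ F (γ t)) (γ t) :=
          (hdiffF _ (hγB t ht)).hasFDerivAt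
        have h3 : HasDerivAt (fun s => F (γ s)) (fderiv ℝ F (γ t) u) t :=
          h2.comp_hasDerivAt t h1
        have h4 := h3.clm_apply (hasDerivAt_const t u)
        simpa using h4
      have hgcont : ContinuousOn g (Set.Icc 0 1) := fun t ht =>
        (hgderiv t ht).continuousAt.continuousWithinAt
      obtain ⟨c, hc, hceq⟩ := exists_hasDerivAt_eq_slope g
        (fun t => fderiv ℝ F (γ t) u u) one_pos hgcont
        (fun t ht => hgderiv t (Set.mem_Icc_of_Ioo ht))
      have hγ1 : γ 1 = xhat := by simp [hγ, hudef]
      have hγ0 : γ 0 = xs := by simp [hγ]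
      have hg1 : g 1 = 0 := by
        show F (γ 1) u = 0
        rw [hγ1, hcrit]
        rfl
      have hg0 : g 0 = F xs u := by
        show F (γ 0) u = F xs u
        rw [hγ0]
      have hsc' := hsc (γ c) (hγB c (Set.mem_Icc_of_Ioo hc)) u
      have hceq' : fderiv ℝ F (γ c) u u = -(F xs u) := by
        rw [hceq, hg1, hg0]; ring
      rw [hceq'] at hsc'
      have hFxs : -(F xs u) ≤ G * ‖u‖ := by
        have h1 : |F xs u| ≤ ‖F xs‖ * ‖u‖ := by
          calc |F xs u| = ‖F xs u‖ := rfl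
            _ ≤ ‖F xs‖ * ‖u‖ := (F xs).le_opNorm u
        rw [hG]
        have := abs_le.mp h1
        linarith [this.1]
      have h5 : αvp * ‖u‖ ^ 2 ≤ G * ‖u‖ := hsc'.trans hFxs
      have h6 : (αvp * ‖u‖) * ‖u‖ ≤ G * ‖u‖ := by
        have : αvp * ‖u‖ ^ 2 = (αvp * ‖u‖) * ‖u‖ := by ring
        linarith [this ▸ h5]
      have h7 : αvp * ‖u‖ ≤ G := le_of_mul_le_mul_right h6 hunorm
      rw [le_div_iff₀ hαvp]
      linarith
  -- Step B: bound on the amplitude error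
  have hpinv := pinv_aux (A xhat) σmin hσmin (hσminA xhat hxhatΩ)
  have hAlip : ‖A xs - A xhat‖ ≤ σ1 * ‖xs - xhat‖ := by
    apply hΩconv.norm_image_sub_le_of_norm_fderiv_le
      (fun x _ => (hA.differentiable (by norm_num)).differentiableAt)
      (fun x hx => ?_) hxhatΩ hxs
    have h1 := hσ1 x hx
    have h2 : ‖fderiv ℝ A x‖ = ‖iteratedFDeriv ℝ 1 A x‖ := by
      rw [← norm_iteratedFDeriv_fderiv (n := 0), norm_iteratedFDeriv_zero]
    rw [h2]; exact h1
  have hyd : pinv A xhat (A xs ys + w) - ys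
      = pinv A xhat ((A xs - A xhat) ys + w) := by
    have h1 : pinv A xhat (A xhat ys) = ys := hpinv.1 ys
    have h2 : (A xs) ys + w = ((A xs - A xhat) ys + w) + A xhat ys := by
      simp only [ContinuousLinearMap.sub_apply]
      abel
    rw [pinv] at h1 ⊢
    rw [h2, map_add, h1]
    exact add_sub_cancel_right _ _
  have hyb : ‖pinv A xhat (A xs ys + w) - ys‖
      ≤ (σ1 * ‖xhat - xs‖ * ‖ys‖ + ‖w‖) / σmin := by
    rw [hyd]
    refine le_trans (by exact hpinv.2 _) ?_
    have hrev : ‖xs - xhat‖ = ‖xhat - xs‖ := norm_sub_rev xs xhat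
    have hnum : ‖(A xs - A xhat) ys + w‖ ≤ σ1 * ‖xhat - xs‖ * ‖ys‖ + ‖w‖ := by
      have h1 := norm_add_le ((A xs - A xhat) ys) w
      have h2 : ‖(A xs - A xhat) ys‖ ≤ ‖A xs - A xhat‖ * ‖ys‖ :=
        (A xs - A xhat).le_opNorm ys
      have h3 : ‖A xs - A xhat‖ * ‖ys‖ ≤ σ1 * ‖xhat - xs‖ * ‖ys‖ := by
        have h := hAlip
        rw [hrev] at h
        exact mul_le_mul_of_nonneg_right h (norm_nonneg ys)
      linarith
    gcongr
  -- final combination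
  have hDnn : 0 ≤ ‖xhat - xs‖ := norm_nonneg _
  have hc1 : 0 ≤ σ2 * ‖ys‖ + σ1 := by
    have := mul_nonneg hσ2nn (norm_nonneg ys); linarith
  have hmul1 : (σ2 * ‖ys‖ + σ1) * ‖xhat - xs‖ ≤ (σ2 * ‖ys‖ + σ1) * (G / αvp) :=
    mul_le_mul_of_nonneg_left hxdist hc1
  have hmul2 : σ1 * ‖pinv A xhat (A xs ys + w) - ys‖
      ≤ (σ1 / σmin) * ‖w‖ + (σ1 ^ 2 / σmin) * (G / αvp) * ‖ys‖ := by
    have h1 : σ1 * ‖pinv A xhat (A xs ys + w) - ys‖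
        ≤ σ1 * ((σ1 * ‖xhat - xs‖ * ‖ys‖ + ‖w‖) / σmin) :=
      mul_le_mul_of_nonneg_left hyb hσ1nn
    have h2 : σ1 * ((σ1 * ‖xhat - xs‖ * ‖ys‖ + ‖w‖) / σmin)
        = (σ1 / σmin) * ‖w‖ + (σ1 ^ 2 / σmin) * ‖xhat - xs‖ * ‖ys‖ := by
      field_simp; ring
    have h3 : (σ1 ^ 2 / σmin) * ‖xhat - xs‖ * ‖ys‖
        ≤ (σ1 ^ 2 / σmin) * (G / αvp) * ‖ys‖ := by
      apply mul_le_mul_of_nonneg_right _ (norm_nonneg ys)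
      exact mul_le_mul_of_nonneg_left hxdist (div_nonneg (sq_nonneg σ1) hσmin.le)
    rw [h2] at h1
    linarith
  linarith
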